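/- Let C be a cycle of even length n, and let W be a set of m pairwise disjoint gates, where each gate is a pair of adjacent vertices of C, such that exactly m vertices outside C are to be matched, one to a vertex in each gate. Suppose n − m is even. Then one can choose one vertex from each gate so that the chosen vertices divide C into m arcs each of odd length, and consequently the edges consisting of the m gate-to-outside edges together with every second edge along each arc form a perfect matching of the graph on the n + m vertices. -/

import Mathlib

namespace Stmt11Aux

open Finset

variable {n m : ℕ}

/-- rank of gate `i` among gates, by base-vertex value. -/
def rk (g : Fin m → Fin n) (i : Fin m) : ℕ :=
  (univ.filter fun j => (g j).val < (g i).val).card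

/-- chosen vertex of gate `i`. -/
def cc [NeZero n] (g : Fin m → Fin n) (i : Fin m) : Fin n :=
  if ((g i).val + rk g i) % 2 = 1 then g i + 1 else g i

/-- parity of a cycle position, shifted by the number of chosen vertices below it. -/
def pp (c : Fin m → Fin n) (a : Fin n) : ℕ :=
  (a.val + (univ.filter fun i => (c i).val < a.val).card) % 2

/-- the matching involution. -/
noncomputable def ff [NeZero n] (c : Fin m → Fin n) : (Fin n ⊕ Fin m) → (Fin n ⊕ Fin m)
  | .inl a =>
    if h : ∃ i, c i = a then .inr h.choose
    else if pp c a = 0 then .inl (a + 1) else .inl (a - 1)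
  | .inr i => .inl (c i)

theorem pp_lt_two (c : Fin m → Fin n) (a : Fin n) : pp c a < 2 :=
  Nat.mod_lt _ (by norm_num)

variable [NeZero n] {g : Fin m → Fin n}
variable (hgg : ∀ i i', i ≠ i' →
      g i ≠ g i' ∧ g i ≠ g i' + 1 ∧ g i + 1 ≠ g i' ∧ g i + 1 ≠ g i' + 1)

theorem val_add_one (a : Fin n) : (a + 1).val = (a.val + 1) % n := by
  rw [Fin.add_def, Fin.val_one']; simp

include hgg

theorem gval_inj {i j : Fin m} (h : i ≠ j) : (g i).val ≠ (g j).val :=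
  fun hv => (hgg i j h).1 (Fin.ext hv)

theorem rk_last {i : Fin m} (hi : (g i).val = n - 1) : rk g i = m - 1 := by
  have : (univ.filter fun j => (g j).val < (g i).val) = univ.erase i := by
    ext j
    simp only [mem_filter, mem_univ, true_and, mem_erase, and_true]
    constructor
    · intro h hji; subst hji; exact lt_irrefl _ h
    · intro hji
      have h1 : (g j).val ≠ (g i).val := gval_inj hgg hji
      have h2 : (g j).val < n := (g j).isLt
      omega
  rw [rk, this, card_erase_of_mem (mem_univ i), card_univ, Fintype.card_fin]

theorem cc_val (hne : Even n) (hm : Even m) (i : Fin m) :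
    (cc g i).val = (g i).val + ((g i).val + rk g i) % 2 := by
  rw [cc]
  by_cases hp : ((g i).val + rk g i) % 2 = 1
  · rw [if_pos hp]
    have hlast : (g i).val ≠ n - 1 := by
      intro hl
      rw [rk_last hgg hl, hl] at hp
      obtain ⟨k, hk⟩ := hne; obtain ⟨l, hl'⟩ := hm
      have hn1 : 1 ≤ n := Nat.one_le_iff_ne_zero.mpr (NeZero.ne n)
      have hm1 : 1 ≤ m := by
        rcases Nat.eq_zero_or_pos m with h | h
        · subst h; exact absurd (Fin.pos i) (by simp)
        · exact h
      omega
    have hlt : (g i).val < n := (g i).isLt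
    rw [val_add_one, Nat.mod_eq_of_lt (by omega), hp]
  · rw [if_neg hp]
    have : ((g i).val + rk g i) % 2 = 0 := by omega
    rw [this]; omega

theorem cc_parity (hne : Even n) (hm : Even m) (i : Fin m) :
    ((cc g i).val + rk g i) % 2 = 0 := by
  rw [cc_val hgg hne hm]; omega

theorem cc_lt (hne : Even n) (hm : Even m) {i j : Fin m}
    (hij : (g j).val < (g i).val) : (cc g j).val < (cc g i).val := by
  have hne' : j ≠ i := fun h => by subst h; exact lt_irrefl _ hij
  have h1 : (cc g j).val ≤ (g j).val + 1 := by rw [cc_val hgg hne hm]; omega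
  have h2 : (g i).val ≤ (cc g i).val := by rw [cc_val hgg hne hm]; omega
  have h3 : (g j).val + 1 ≠ (g i).val := by
    intro hh
    have hlt : (g j).val + 1 < n := by have := (g i).isLt; omega
    have : (g j + 1).val = (g j).val + 1 := by
      rw [val_add_one, Nat.mod_eq_of_lt hlt]
    exact (hgg j i hne').2.2.1 (Fin.ext (by rw [this, hh]))
  omega

theorem cc_lt_iff (hne : Even n) (hm : Even m) {i j : Fin m} (hij : j ≠ i) :
    ((cc g j).val < (cc g i).val ↔ (g j).val < (g i).val) := by
  constructor
  · intro h
    rcases lt_trichotomy ((g j).val) ((g i).val) with h' | h' | h'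
    · exact h'
    · exact absurd h' (gval_inj hgg hij)
    · exact absurd h (not_lt_of_gt (cc_lt hgg hne hm h'))
  · exact cc_lt hgg hne hm

theorem cc_inj (hne : Even n) (hm : Even m) : Function.Injective (cc g) := by
  intro i j h
  by_contra hij
  rcases lt_trichotomy ((g i).val) ((g j).val) with h' | h' | h'
  · exact absurd (congrArg Fin.val h) (Nat.ne_of_lt (cc_lt hgg hne hm h'))
  · exact gval_inj hgg hij h'
  · exact absurd (congrArg Fin.val h).symm (Nat.ne_of_lt (cc_lt hgg hne hm h'))

theorem pp_cc (hne : Even n) (hm : Even m) (i : Fin m) : pp (cc g) (cc g i) = 0 := by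
  have hfil : (univ.filter fun j => (cc g j).val < (cc g i).val)
      = (univ.filter fun j => (g j).val < (g i).val) := by
    ext j
    simp only [mem_filter, mem_univ, true_and]
    by_cases hji : j = i
    · subst hji; simp
    · exact cc_lt_iff hgg hne hm hji
  rw [pp, hfil]
  exact cc_parity hgg hne hm i

omit hgg in
theorem ppA {c : Fin m → Fin n} (hc : Function.Injective c)
    (hne : Even n) (hm : Even m) (a : Fin n) :
    pp c (a + 1) = (pp c a + 1 + (if ∃ i, c i = a then 1 else 0)) % 2 := by
  classical
  set e : ℕ := (univ.filter fun i => c i = a).card with he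
  have hee : e = if ∃ i, c i = a then 1 else 0 := by
    split
    · next h =>
      obtain ⟨k, hk⟩ := h
      have : (univ.filter fun i => c i = a) = {k} := by
        ext j
        simp only [mem_filter, mem_univ, true_and, mem_singleton]
        constructor
        · intro hj; exact hc (hj.trans hk.symm)
        · intro hj; subst hj; exact hk
      rw [he, this, card_singleton]
    · next h =>
      rw [he, filter_eq_empty_iff.mpr, card_empty]
      intro j _ hj; exact h ⟨j, hj⟩
  have hvala : ∀ i : Fin m, (c i).val = a.val ↔ c i = a := by
    intro i; exact ⟨fun h => Fin.ext h, fun h => congrArg Fin.val h⟩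
  by_cases hlt : a.val + 1 < n
  · have hv : (a + 1).val = a.val + 1 := by
      rw [val_add_one, Nat.mod_eq_of_lt hlt]
    have hsplit : (univ.filter fun i => (c i).val < a.val + 1)
        = (univ.filter fun i => (c i).val < a.val) ∪ (univ.filter fun i => c i = a) := by
      ext j
      simp only [mem_filter, mem_univ, true_and, mem_union]
      rw [← hvala j]
      omega
    have hdisj : Disjoint (univ.filter fun i => (c i).val < a.val)
        (univ.filter fun i => c i = a) := by
      rw [disjoint_filter]
      intro j _ hj hj'
      rw [← hvala j] at hj'
      omega
    rw [pp, pp, hv, hsplit, card_union_of_disjoint hdisj, ← he]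
    omega
  · have hvn : a.val = n - 1 := by have := a.isLt; omega
    have hv : (a + 1).val = 0 := by
      rw [val_add_one]
      have : a.val + 1 = n := by have := a.isLt; omega
      rw [this, Nat.mod_self]
    have hz : pp c (a + 1) = 0 := by
      rw [pp, hv]
      have : (univ.filter fun i => (c i).val < 0) = ∅ := by
        apply filter_eq_empty_iff.mpr; intro j _; omega
      rw [this]; simp
    have htot : (univ.filter fun i => (c i).val < a.val).card + e = m := by
      rw [he, ← card_union_of_disjoint]
      · have : ((univ.filter fun i => (c i).val < a.val) ∪
            (univ.filter fun i => c i = a)) = univ := by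
          ext j
          simp only [mem_union, mem_filter, mem_univ, true_and, iff_true]
          rw [← hvala j]
          have := (c j).isLt
          omega
        rw [this, card_univ, Fintype.card_fin]
      · rw [disjoint_filter]
        intro j _ hj hj'
        rw [← hvala j] at hj'
        omega
    rw [hz, pp, ← hee]
    have hn2 : n % 2 = 0 := Nat.even_iff.mp hne
    have hm2 : m % 2 = 0 := Nat.even_iff.mp hm
    have hn1 : 1 ≤ n := Nat.one_le_iff_ne_zero.mpr (NeZero.ne n)
    omega

end Stmt11Aux


/-- Let `C` be a cycle of even length `n` (vertices `Fin n`, edges `a — a+1`), with `m`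
pairwise disjoint gates `{g i, g i + 1}` and `m` outside vertices, the `i`-th adjacent to
both vertices of the `i`-th gate. If `n - m` is even, one can choose one vertex `c i` from
each gate so that there is a perfect matching of the whole graph matching each outside
vertex `i` to its chosen gate vertex `c i` (the remaining matching edges being cycle
edges). -/
theorem stmt11 (n m : ℕ) [NeZero n] (hn : 3 ≤ n) (hne : Even n) (hmn : m ≤ n)
    (hnm : Even (n - m))
    (g : Fin m → Fin n)
    (hg : ∀ i i', i ≠ i' →
      g i ≠ g i' ∧ g i ≠ g i' + 1 ∧ g i + 1 ≠ g i' ∧ g i + 1 ≠ g i' + 1)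
    (G : SimpleGraph (Fin n ⊕ Fin m))
    (hG : ∀ x y, G.Adj x y ↔
      (∃ a : Fin n, (x = .inl a ∧ y = .inl (a + 1)) ∨ (x = .inl (a + 1) ∧ y = .inl a)) ∨
      (∃ i : Fin m,
        (x = .inr i ∧ (y = .inl (g i) ∨ y = .inl (g i + 1))) ∨
        (y = .inr i ∧ (x = .inl (g i) ∨ x = .inl (g i + 1))))) :
    ∃ c : Fin m → Fin n, (∀ i, c i = g i ∨ c i = g i + 1) ∧
      ∃ M : G.Subgraph, M.IsPerfectMatching ∧
        (∀ i : Fin m, M.Adj (.inr i) (.inl (c i))) := by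
  classical
  open Stmt11Aux in
  have hm : Even m := ((Nat.even_sub hmn).mp hnm).mp hne
  set c : Fin m → Fin n := Stmt11Aux.cc g with hcdef
  have hcg : ∀ i, c i = g i ∨ c i = g i + 1 := by
    intro i
    rw [hcdef]
    unfold Stmt11Aux.cc
    split
    · exact Or.inr rfl
    · exact Or.inl rfl
  have hcinj : Function.Injective c := Stmt11Aux.cc_inj hg hne hm
  have hB : ∀ i, Stmt11Aux.pp c (c i) = 0 := fun i => Stmt11Aux.pp_cc hg hne hm i
  have hA : ∀ a, Stmt11Aux.pp c (a + 1) =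
      (Stmt11Aux.pp c a + 1 + (if ∃ i, c i = a then 1 else 0)) % 2 :=
    Stmt11Aux.ppA hcinj hne hm
  have key1 : ∀ a : Fin n, ¬(∃ i, c i = a) → Stmt11Aux.pp c a = 0 →
      ¬(∃ i, c i = a + 1) ∧ Stmt11Aux.pp c (a + 1) ≠ 0 := by
    intro a h0 hp
    have hA1 := hA a
    rw [if_neg h0, hp] at hA1
    norm_num at hA1
    refine ⟨?_, by omega⟩
    rintro ⟨k, hk⟩
    have := hB k
    rw [hk] at this
    omega
  have key2 : ∀ a : Fin n, ¬(∃ i, c i = a) → Stmt11Aux.pp c a ≠ 0 →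
      ¬(∃ i, c i = a - 1) ∧ Stmt11Aux.pp c (a - 1) = 0 := by
    intro a h0 hp
    have hs : a - 1 + 1 = a := sub_add_cancel a 1
    have hA2 := hA (a - 1)
    rw [hs] at hA2
    have hnot : ¬(∃ i, c i = a - 1) := by
      rintro ⟨k, hk⟩
      have hBk := hB k
      rw [hk] at hBk
      rw [if_pos ⟨k, hk⟩, hBk] at hA2
      norm_num at hA2
      exact hp hA2
    refine ⟨hnot, ?_⟩
    rw [if_neg hnot] at hA2
    have h1 := Stmt11Aux.pp_lt_two c a
    have h2 := Stmt11Aux.pp_lt_two c (a - 1)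
    omega
  -- the involution property
  have hinv : ∀ x, Stmt11Aux.ff c (Stmt11Aux.ff c x) = x := by
    intro x
    match x with
    | .inr i =>
      have h' : ∃ j, c j = c i := ⟨i, rfl⟩
      simp only [Stmt11Aux.ff, dif_pos h']
      exact congrArg Sum.inr (hcinj h'.choose_spec)
    | .inl a =>
      by_cases h : ∃ i, c i = a
      · simp only [Stmt11Aux.ff, dif_pos h]
        exact congrArg Sum.inl h.choose_spec
      · by_cases hpa : Stmt11Aux.pp c a = 0
        · obtain ⟨h1, h2⟩ := key1 a h hpa
          simp only [Stmt11Aux.ff, dif_neg h, if_pos hpa, dif_neg h1, if_neg h2]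
          rw [add_sub_cancel_right]
        · obtain ⟨h1, h2⟩ := key2 a h hpa
          simp only [Stmt11Aux.ff, dif_neg h, if_neg hpa, dif_neg h1, if_pos h2]
          rw [sub_add_cancel]
  -- adjacency of x and ff x in G
  have hGadj : ∀ x, G.Adj x (Stmt11Aux.ff c x) := by
    intro x
    match x with
    | .inr i =>
      rw [hG]
      right
      exact ⟨i, Or.inl ⟨rfl, by simpa [Stmt11Aux.ff] using hcg i⟩⟩
    | .inl a =>
      by_cases h : ∃ i, c i = a
      · rw [hG]
        right
        refine ⟨h.choose, Or.inr ⟨by simp [Stmt11Aux.ff, dif_pos h], ?_⟩⟩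
        have := h.choose_spec
        rcases hcg h.choose with hh | hh
        · exact Or.inl (by rw [← hh, this])
        · exact Or.inr (by rw [← hh, this])
      · by_cases hpa : Stmt11Aux.pp c a = 0
        · rw [hG]
          left
          exact ⟨a, Or.inl ⟨rfl, by simp [Stmt11Aux.ff, dif_neg h, if_pos hpa]⟩⟩
        · rw [hG]
          left
          refine ⟨a - 1, Or.inr ⟨by rw [sub_add_cancel], ?_⟩⟩
          simp [Stmt11Aux.ff, dif_neg h, if_neg hpa]
  refine ⟨c, hcg, ?_⟩
  refine ⟨⟨Set.univ, fun x y => Stmt11Aux.ff c x = y ∨ Stmt11Aux.ff c y = x,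
      ?_, fun _ => trivial, ⟨fun x y h => h.symm⟩⟩, ⟨?_, fun v => trivial⟩, ?_⟩
  · rintro v w (h | h)
    · exact h ▸ hGadj v
    · exact (h ▸ hGadj w).symm
  · intro v _
    refine ⟨Stmt11Aux.ff c v, Or.inl rfl, ?_⟩
    rintro y (h | h)
    · exact h.symm
    · have := congrArg (Stmt11Aux.ff c) h
      rw [hinv y] at this
      exact this
  · intro i
    exact Or.inl rfl
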